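/- Let L be a finite index set and for each l ∈ L let real numbers m_l, o_l, n_l satisfy 0 ≤ m_l ≤ o_l ≤ n_l and n_l > 0, and suppose Σ_l o_l > 0. Let γ ∈ [0,1] with Σ_l (o_l − m_l) = (1−γ)·Σ_l o_l, and let β ≥ 0. Then γ·Σ_l o_l + β·Σ_l ((n_l − m_l)/n_l)·(o_l − m_l) ≥ (γ + β(1−γ)²)·Σ_l o_l. -/

import Mathlib

open scoped BigOperators

/-- **Final evaluation of the factor-revealing program for approximate second-stage
matchings (via Cauchy–Schwarz).**
If `0 ≤ m_l ≤ o_l ≤ n_l`, `n_l > 0` for all `l`, `Σ o_l > 0`, `γ ∈ [0,1]` with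
`Σ (o_l − m_l) = (1−γ)·Σ o_l`, and `β ≥ 0`, then
`γ·Σ o_l + β·Σ ((n_l − m_l)/n_l)·(o_l − m_l) ≥ (γ + β(1−γ)²)·Σ o_l`. -/
theorem factor_revealing_robustness_value
    {ι : Type*} (L : Finset ι) (m o n : ι → ℝ)
    (hm : ∀ l ∈ L, 0 ≤ m l)
    (hmo : ∀ l ∈ L, m l ≤ o l)
    (hon : ∀ l ∈ L, o l ≤ n l)
    (hn : ∀ l ∈ L, 0 < n l)
    (hosum : 0 < ∑ l ∈ L, o l)
    (γ : ℝ) (hγ0 : 0 ≤ γ) (hγ1 : γ ≤ 1)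
    (hbal : ∑ l ∈ L, (o l - m l) = (1 - γ) * ∑ l ∈ L, o l)
    (β : ℝ) (hβ : 0 ≤ β) :
    γ * ∑ l ∈ L, o l + β * ∑ l ∈ L, (n l - m l) / n l * (o l - m l) ≥
      (γ + β * (1 - γ) ^ 2) * ∑ l ∈ L, o l := by
  classical
  set L' : Finset ι := L.filter (fun l => 0 < o l) with hL'
  have hsub : L' ⊆ L := Finset.filter_subset _ _
  -- sums of o and o - m agree on L and L'
  have ho_eq : ∑ l ∈ L', o l = ∑ l ∈ L, o l := by
    refine Finset.sum_filter_of_ne fun l hl h => ?_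
    rcases lt_or_eq_of_le ((hm l hl).trans (hmo l hl)) with h' | h'
    · exact h'
    · exact absurd h'.symm h
  have hom_eq : ∑ l ∈ L', (o l - m l) = ∑ l ∈ L, (o l - m l) := by
    refine Finset.sum_filter_of_ne fun l hl h => ?_
    by_contra ho
    push_neg at ho
    have ho0 : o l = 0 := le_antisymm ho ((hm l hl).trans (hmo l hl))
    have hm0 : m l = 0 := le_antisymm (ho0 ▸ hmo l hl) (hm l hl)
    exact h (by rw [ho0, hm0]; ring)
  -- pointwise bound on L': (n-m)/n * (o-m) ≥ (o-m)^2 / o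
  have hpt : ∀ l ∈ L', (o l - m l) ^ 2 / o l ≤ (n l - m l) / n l * (o l - m l) := by
    intro l hl
    have hlL := hsub hl
    have ho : 0 < o l := (Finset.mem_filter.mp hl).2
    have hnl := hn l hlL
    have h1 : (o l - m l) / o l ≤ (n l - m l) / n l := by
      rw [div_le_div_iff₀ ho hnl]
      nlinarith [hm l hlL, hmo l hlL, hon l hlL]
    have h2 : 0 ≤ o l - m l := sub_nonneg.mpr (hmo l hlL)
    calc (o l - m l) ^ 2 / o l = (o l - m l) / o l * (o l - m l) := by ring
      _ ≤ (n l - m l) / n l * (o l - m l) := by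
          exact mul_le_mul_of_nonneg_right h1 h2
  -- Sedrakyan on L'
  have hCS : (∑ l ∈ L', (o l - m l)) ^ 2 / ∑ l ∈ L', o l ≤
      ∑ l ∈ L', (o l - m l) ^ 2 / o l :=
    Finset.sq_sum_div_le_sum_sq_div _ _ (fun l hl => (Finset.mem_filter.mp hl).2)
  have hnonneg : ∀ l ∈ L, 0 ≤ (n l - m l) / n l * (o l - m l) := by
    intro l hl
    exact mul_nonneg (div_nonneg (by linarith [hm l hl, hmo l hl, hon l hl]) (hn l hl).le)
      (sub_nonneg.mpr (hmo l hl))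
  have hS : ∑ l ∈ L', (n l - m l) / n l * (o l - m l) ≤
      ∑ l ∈ L, (n l - m l) / n l * (o l - m l) :=
    Finset.sum_le_sum_of_subset_of_nonneg hsub (fun l hl _ => hnonneg l hl)
  have key : (1 - γ) ^ 2 * ∑ l ∈ L, o l ≤
      ∑ l ∈ L, (n l - m l) / n l * (o l - m l) := by
    have h0 : (∑ l ∈ L', (o l - m l)) ^ 2 / ∑ l ∈ L', o l
        = (1 - γ) ^ 2 * ∑ l ∈ L, o l := by
      rw [hom_eq, ho_eq, hbal, mul_pow]
      field_simp
    calc (1 - γ) ^ 2 * ∑ l ∈ L, o l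
        = (∑ l ∈ L', (o l - m l)) ^ 2 / ∑ l ∈ L', o l := h0.symm
      _ ≤ ∑ l ∈ L', (o l - m l) ^ 2 / o l := hCS
      _ ≤ ∑ l ∈ L', (n l - m l) / n l * (o l - m l) := Finset.sum_le_sum hpt
      _ ≤ _ := hS
  nlinarith [key]
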